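/- Let 0 < p < 1, q = 1 - p, and N ≥ 0. Define the Krawtchouk polynomials K_k(x,N) by the generating function (1+pv)^(N-x) (1-qv)^x = Σ_{k=0}^N v^k K_k(x,N). Then for 0 ≤ i, j ≤ N, Σ_{x=0}^N binom(N,x) q^(N-x) p^x K_i(x,N) K_j(x,N) = δ_{ij} binom(N,i) (pq)^i. -/

import Mathlib

open Finset

/-- If two polynomial expressions (written as sums of coefficients times powers)
agree at every real point, their coefficients agree. -/
lemma poly_coeff_ext {n : ℕ} (a b : ℕ → ℝ)
    (h : ∀ v : ℝ, ∑ k ∈ range n, v ^ k * a k = ∑ k ∈ range n, v ^ k * b k) :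
    ∀ k < n, a k = b k := by
  intro k hk
  have hP : (∑ m ∈ range n, (Polynomial.C (a m - b m) * Polynomial.X ^ m) : Polynomial ℝ)
      = 0 := by
    apply Polynomial.funext
    intro v
    have hv := h v
    simp only [Polynomial.eval_finset_sum, Polynomial.eval_mul, Polynomial.eval_pow,
      Polynomial.eval_C, Polynomial.eval_X, Polynomial.eval_zero]
    have hsplit : ∑ m ∈ range n, (a m - b m) * v ^ m
        = ∑ m ∈ range n, v ^ m * a m - ∑ m ∈ range n, v ^ m * b m := by
      rw [← Finset.sum_sub_distrib]
      exact Finset.sum_congr rfl fun m _ => by ring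
    rw [hsplit, hv, sub_self]
  have hco := congrArg (fun P => Polynomial.coeff P k) hP
  simp only [Polynomial.finset_sum_coeff, Polynomial.coeff_C_mul, Polynomial.coeff_X_pow,
    mul_ite, mul_one, mul_zero, Finset.sum_ite_eq, Finset.mem_range, hk, if_true,
    Polynomial.coeff_zero] at hco
  linarith

/-- Orthogonality of one-variable Krawtchouk polynomials with respect to the
binomial distribution. -/
theorem krawtchouk_orthogonality
    (p q : ℝ) (hp : 0 < p) (hp1 : p < 1) (hq : q = 1 - p)
    (N : ℕ) (K : ℕ → ℕ → ℝ)
    (hK : ∀ x ≤ N, ∀ v : ℝ,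
      (1 + p * v) ^ (N - x) * (1 - q * v) ^ x =
        ∑ k ∈ range (N + 1), v ^ k * K k x) :
    ∀ i ≤ N, ∀ j ≤ N,
      ∑ x ∈ range (N + 1),
          (N.choose x : ℝ) * q ^ (N - x) * p ^ x * K i x * K j x =
        (if i = j then (N.choose i : ℝ) * (p * q) ^ i else 0) := by
  set c : ℕ → ℝ := fun x => (N.choose x : ℝ) * q ^ (N - x) * p ^ x with hc
  set S : ℕ → ℕ → ℝ := fun a b => ∑ x ∈ range (N + 1), c x * (K a x * K b x) with hS
  -- Key generating-function identity
  have key : ∀ v w : ℝ,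
      ∑ x ∈ range (N + 1),
          c x * ((∑ k ∈ range (N + 1), v ^ k * K k x) *
            (∑ k ∈ range (N + 1), w ^ k * K k x))
      = ∑ k ∈ range (N + 1), v ^ k * (w ^ k * ((N.choose k : ℝ) * (p * q) ^ k)) := by
    intro v w
    have lhs : ∀ x ∈ range (N + 1),
        c x * ((∑ k ∈ range (N + 1), v ^ k * K k x) *
          (∑ k ∈ range (N + 1), w ^ k * K k x))
        = (p * (1 - q * v) * (1 - q * w)) ^ x * (q * (1 + p * v) * (1 + p * w)) ^ (N - x)
            * (N.choose x : ℝ) := by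
      intro x hx
      rw [← hK x (by simp at hx; omega) v, ← hK x (by simp at hx; omega) w]
      simp only [hc, mul_pow]
      ring
    rw [Finset.sum_congr rfl lhs, ← add_pow]
    have hsum : p * (1 - q * v) * (1 - q * w) + q * (1 + p * v) * (1 + p * w)
        = p * q * (v * w) + 1 := by subst hq; ring
    rw [hsum, add_pow]
    refine Finset.sum_congr rfl fun k hk => ?_
    rw [one_pow, mul_one]
    ring
  -- Rewrite LHS as a double sum in powers of v and w
  have expand : ∀ v w : ℝ,
      ∑ x ∈ range (N + 1),
          c x * ((∑ k ∈ range (N + 1), v ^ k * K k x) *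
            (∑ k ∈ range (N + 1), w ^ k * K k x))
      = ∑ a ∈ range (N + 1), v ^ a * ∑ b ∈ range (N + 1), w ^ b * S a b := by
    intro v w
    have h1 : ∑ x ∈ range (N + 1),
          c x * ((∑ k ∈ range (N + 1), v ^ k * K k x) *
            (∑ k ∈ range (N + 1), w ^ k * K k x))
        = ∑ x ∈ range (N + 1), ∑ a ∈ range (N + 1), ∑ b ∈ range (N + 1),
            v ^ a * (w ^ b * (c x * (K a x * K b x))) := by
      refine Finset.sum_congr rfl fun x _ => ?_
      rw [Finset.sum_mul_sum, Finset.mul_sum]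
      refine Finset.sum_congr rfl fun a _ => ?_
      rw [Finset.mul_sum]
      refine Finset.sum_congr rfl fun b _ => ?_
      ring
    rw [h1, Finset.sum_comm]
    refine Finset.sum_congr rfl fun a _ => ?_
    rw [Finset.sum_comm, Finset.mul_sum]
    refine Finset.sum_congr rfl fun b _ => ?_
    rw [Finset.mul_sum, Finset.mul_sum]
  -- First coefficient extraction (in v)
  have step1 : ∀ a < N + 1, ∀ w : ℝ,
      ∑ b ∈ range (N + 1), w ^ b * S a b
        = w ^ a * ((N.choose a : ℝ) * (p * q) ^ a) := by
    intro a ha w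
    exact poly_coeff_ext (fun a => ∑ b ∈ range (N + 1), w ^ b * S a b)
      (fun k => w ^ k * ((N.choose k : ℝ) * (p * q) ^ k))
      (fun v => by rw [← expand v w, key v w]) a ha
  -- Second coefficient extraction (in w)
  intro i hi j hj
  have step2 : ∀ b < N + 1,
      S i b = (if b = i then (N.choose i : ℝ) * (p * q) ^ i else 0) := by
    refine poly_coeff_ext (S i)
      (fun b => if b = i then (N.choose i : ℝ) * (p * q) ^ i else 0) (fun w => ?_)
    rw [step1 i (by omega) w]
    simp only [mul_ite, mul_zero, Finset.sum_ite_eq', Finset.mem_range]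
    rw [if_pos (by omega)]
  have := step2 j (by omega)
  have hterm : ∑ x ∈ range (N + 1),
      (N.choose x : ℝ) * q ^ (N - x) * p ^ x * K i x * K j x = S i j := by
    refine Finset.sum_congr rfl fun x _ => ?_
    simp only [hS, hc]; ring
  rw [hterm, this]
  by_cases h : i = j <;> simp [h, eq_comm]
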